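/- Let c > 0, i ≥ 1, and let I_1, ..., I_i > 0, S_1, ..., S_{i-1} < 0, L_1, ..., L_{i-1} > 0, L̄ > 0 be real numbers with Σ_{j=1}^{i} I_j < c, and set I = Σ_{j=1}^{i-1} I_j and K = -Σ_{j=1}^{i-1} L_j S_j / c + (L̄/c) I_i + (L̄/c) I. Let v_0, v_n, α, Δt be real numbers with α ≥ 0, and suppose: (a) v_n - v_0 = I_i Δt - c α; (b) v_0 - K ≤ c α - (c - I) Δt; (c) v_0 ≤ (L̄/c) I_i. Then v_n ≤ (I_i / (c (c - I))) (c L̄ - Σ_{j=1}^{i-1} S_j L_j). -/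

import Mathlib

open Finset

/-- the final algebraic deduction in the proof of Theorem 1,
yielding the improved credit bound `V_i^max`. -/
theorem final_deduction
    (c : ℝ) (hc : 0 < c) (i : ℕ) (hi : 1 ≤ i)
    (I S L : ℕ → ℝ) (Lbar : ℝ)
    (hI : ∀ j ∈ Icc 1 i, 0 < I j)
    (hS : ∀ j ∈ Icc 1 (i - 1), S j < 0)
    (hL : ∀ j ∈ Icc 1 (i - 1), 0 < L j)
    (hLbar : 0 < Lbar)
    (hsum : ∑ j ∈ Icc 1 i, I j < c)
    (Isum K : ℝ)
    (hIsum : Isum = ∑ j ∈ Icc 1 (i - 1), I j)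
    (hK : K = -(∑ j ∈ Icc 1 (i - 1), L j * S j / c) + (Lbar / c) * I i
            + (Lbar / c) * Isum)
    (v₀ vₙ α Δt : ℝ) (hα : 0 ≤ α)
    (ha : vₙ - v₀ = I i * Δt - c * α)
    (hb : v₀ - K ≤ c * α - (c - Isum) * Δt)
    (hcv : v₀ ≤ (Lbar / c) * I i) :
    vₙ ≤ (I i / (c * (c - Isum))) * (c * Lbar - ∑ j ∈ Icc 1 (i - 1), S j * L j) := by
  have hmem : i ∈ Icc 1 i := mem_Icc.2 ⟨hi, le_refl i⟩
  have hIi : 0 < I i := hI i hmem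
  have hsplit : ∑ j ∈ Icc 1 i, I j = (∑ j ∈ Icc 1 (i-1), I j) + I i := by
    have h1 : i - 1 + 1 = i := Nat.succ_pred_eq_of_pos hi
    rw [← h1, Finset.sum_Icc_succ_top (by omega)]
    simp
  have hD : Isum + I i < c := by
    rw [hIsum]; rw [hsplit] at hsum; linarith
  have hT : ∑ j ∈ Icc 1 (i-1), L j * S j / c
      = (∑ j ∈ Icc 1 (i-1), S j * L j) / c := by
    rw [← Finset.sum_div]
    congr 1
    exact Finset.sum_congr rfl (fun j _ => by ring)
  set T := ∑ j ∈ Icc 1 (i-1), S j * L j with hTdef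
  have hKc : c * K = -T + Lbar * I i + Lbar * Isum := by
    rw [hK, hT]; field_simp
  have hcv' : c * v₀ ≤ Lbar * I i := by
    have := mul_le_mul_of_nonneg_left hcv hc.le
    calc c * v₀ ≤ c * ((Lbar / c) * I i) := this
      _ = Lbar * I i := by field_simp
  have hD0 : 0 < c - Isum := by linarith
  have hDI : (0:ℝ) ≤ c - Isum - I i := by linarith
  have haX : (vₙ - v₀) * (c * (c - Isum)) = (I i * Δt - c * α) * (c * (c - Isum)) := by
    rw [ha]
  have hbX : c * I i * (v₀ - K) ≤ c * I i * (c * α - (c - Isum) * Δt) :=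
    mul_le_mul_of_nonneg_left hb (by positivity)
  have hKX : I i * (c * K) = I i * (-T + Lbar * I i + Lbar * Isum) := by rw [hKc]
  have hcvX : (c - Isum - I i) * (c * v₀) ≤ (c - Isum - I i) * (Lbar * I i) :=
    mul_le_mul_of_nonneg_left hcv' hDI
  have hαX : (0:ℝ) ≤ c * c * (c - Isum - I i) * α :=
    mul_nonneg (mul_nonneg (mul_nonneg hc.le hc.le) hDI) hα
  rw [div_mul_eq_mul_div, le_div_iff₀ (by positivity)]
  nlinarith [haX, hbX, hKX, hcvX, hαX]
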